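/- Let d ≥ 4 and let f : ℝ_{≥0} → ℝ be measurable and locally bounded, i.e., f restricted to [0,s] is essentially bounded for every s > 0. Then the function F : ℝ_{≥0} → ℝ defined by F(s) = (2 Γ(d/2) / (√π Γ((d-1)/2))) ∫₀¹ f(t s) (1 - t²)^{(d-3)/2} dt is differentiable at every point s ∈ (0, ∞). -/

import Mathlib

open MeasureTheory Set intervalIntegral

namespace RLaux

noncomputable def kern (α : ℝ) (u r : ℝ) : ℝ := 2*α*r*(r^2-u^2)^(α-1)

lemma kern_meas (α u : ℝ) : Measurable (kern α u) := by
  unfold kern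
  fun_prop

lemma rpow_le_add {a b z β : ℝ} (ha : 0 < a) (haz : a ≤ z) (hzb : z ≤ b) :
    z ^ β ≤ a ^ β + b ^ β := by
  rcases le_or_gt 0 β with hβ | hβ
  · have h1 : z ^ β ≤ b ^ β := Real.rpow_le_rpow (by linarith) hzb hβ
    have h2 := Real.rpow_nonneg (le_of_lt ha) β
    linarith
  · have h1 : z ^ β ≤ a ^ β := Real.rpow_le_rpow_of_nonpos ha haz hβ.le
    have h2 : (0:ℝ) ≤ b ^ β := Real.rpow_nonneg (by linarith) β
    linarith

lemma kern_nonneg {α u r : ℝ} (hα : 0 < α) (hu : 0 ≤ u) (hur : u < r) :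
    0 ≤ kern α u r := by
  have h1 : (0:ℝ) < r ^ 2 - u ^ 2 := by nlinarith
  have h2 := Real.rpow_nonneg h1.le (α - 1)
  unfold kern
  have : 0 < r := lt_of_le_of_lt hu hur
  have : (0:ℝ) ≤ 2*α*r := by positivity
  exact mul_nonneg this h2

lemma kern_bound {α u x : ℝ} (hα : 0 < α) (hu : 0 ≤ u) (hux : u < x) :
    ∀ r ∈ Ioo u x, ‖kern α u r‖ ≤ (2*α*(x^α + x*(2*x)^(α-1))) * (r-u)^(α-1) := by
  intro r hr
  obtain ⟨hur, hrx⟩ := hr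
  have hr0 : 0 < r := lt_of_le_of_lt hu hur
  have hx0 : 0 < x := lt_trans hr0 hrx
  have hsplit : (r^2 - u^2 : ℝ) = (r-u)*(r+u) := by ring
  have hrw : (r^2-u^2) ^ (α-1) = (r-u)^(α-1) * (r+u)^(α-1) := by
    rw [hsplit, Real.mul_rpow (by linarith) (by linarith)]
  have key : r * (r+u)^(α-1) ≤ x^α + x*(2*x)^(α-1) := by
    rcases le_or_gt (α-1) 0 with hβ | hβ
    · have h1 : (r+u)^(α-1) ≤ r^(α-1) :=
        Real.rpow_le_rpow_of_nonpos hr0 (by linarith) hβ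
      have h2 : r * r^(α-1) = r ^ α := by
        have h := Real.rpow_add hr0 1 (α-1)
        rw [Real.rpow_one] at h
        rw [← h]
        norm_num
      have h3 : r ^ α ≤ x ^ α := Real.rpow_le_rpow hr0.le hrx.le hα.le
      have h4 : 0 ≤ x*(2*x)^(α-1) := by positivity
      nlinarith [Real.rpow_nonneg hr0.le (α-1)]
    · have h1 : (r+u)^(α-1) ≤ (2*x)^(α-1) :=
        Real.rpow_le_rpow (by linarith) (by linarith) hβ.le
      have h3 : 0 ≤ x ^ α := Real.rpow_nonneg hx0.le α
      nlinarith [Real.rpow_nonneg (by linarith : (0:ℝ) ≤ r + u) (α-1)]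
  have hnn := kern_nonneg hα hu hur
  rw [Real.norm_eq_abs, abs_of_nonneg hnn]
  unfold kern
  rw [hrw]
  have hru : 0 ≤ (r-u)^(α-1) := Real.rpow_nonneg (by linarith) _
  calc 2*α*r*((r-u)^(α-1) * (r+u)^(α-1))
      = 2*α*(r * (r+u)^(α-1)) * (r-u)^(α-1) := by ring
    _ ≤ 2*α*(x^α + x*(2*x)^(α-1)) * (r-u)^(α-1) := by
        apply mul_le_mul_of_nonneg_right _ hru
        have : 0 < 2*α := by linarith
        apply mul_le_mul_of_nonneg_left key this.le

lemma kern_intervalIntegrable {α u x : ℝ} (hα : 0 < α) (hu : 0 ≤ u) (hux : u < x) :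
    IntervalIntegrable (kern α u) volume u x := by
  rw [intervalIntegrable_iff_integrableOn_Ioo_of_le hux.le]
  have hg : IntervalIntegrable
      (fun r : ℝ => (2*α*(x^α + x*(2*x)^(α-1))) * (r-u)^(α-1)) volume u x := by
    have h0 : IntervalIntegrable (fun y : ℝ => y ^ (α-1)) volume 0 (x-u) :=
      intervalIntegrable_rpow' (by linarith)
    have h1 := h0.comp_sub_right u
    simp only [zero_add, sub_add_cancel] at h1
    exact h1.const_mul _
  rw [intervalIntegrable_iff_integrableOn_Ioo_of_le hux.le] at hg
  refine Integrable.mono' hg ((kern_meas α u).aestronglyMeasurable) ?_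
  rw [ae_restrict_iff' measurableSet_Ioo]
  exact Filter.Eventually.of_forall (kern_bound hα hu hux)

lemma kern_integral {α u x : ℝ} (hα : 0 < α) (hu : 0 ≤ u) (hux : u < x) :
    ∫ r in u..x, kern α u r = (x^2-u^2)^α := by
  have hcont : ContinuousOn (fun r : ℝ => (r^2-u^2)^α) (Icc u x) := by
    intro r _
    apply ContinuousAt.continuousWithinAt
    exact (Real.continuousAt_rpow_const _ _ (Or.inr hα.le)).comp
      (((continuous_pow 2).sub continuous_const).continuousAt)
  have hderiv : ∀ r ∈ Ioo u x,
      HasDerivWithinAt (fun r : ℝ => (r^2-u^2)^α) (kern α u r) (Ioi r) r := by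
    intro r hr
    have hr0 : 0 < r := lt_of_le_of_lt hu hr.1
    have hpos : (0:ℝ) < r^2 - u^2 := by nlinarith [hr.1]
    have h1 : HasDerivAt (fun r : ℝ => r^2 - u^2) (2*r) r := by
      simpa using ((hasDerivAt_pow 2 r).sub_const (u^2))
    have h2 := (Real.hasDerivAt_rpow_const (x := r^2-u^2) (p := α) (Or.inl hpos.ne')).comp r h1
    have : (fun r : ℝ => (r^2-u^2)^α) = (fun y : ℝ => y ^ α) ∘ (fun r : ℝ => r^2 - u^2) := rfl
    rw [this]
    refine HasDerivWithinAt.congr_deriv h2.hasDerivWithinAt ?_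
    unfold kern; ring
  have := integral_eq_sub_of_hasDeriv_right_of_le hux.le hcont hderiv
    (kern_intervalIntegrable hα hu hux)
  rw [this]
  have : (u^2 - u^2 : ℝ) = 0 := by ring
  rw [this, Real.zero_rpow hα.ne']
  ring


noncomputable def psi (α : ℝ) (f : ℝ → ℝ) (r : ℝ) : ℝ := ∫ u in Ioo 0 r, f u * kern α u r

noncomputable def Pfun (α : ℝ) (f : ℝ → ℝ) (u r : ℝ) : ℝ :=
  Set.indicator {p : ℝ × ℝ | p.1 < p.2} (fun p => f p.1 * kern α p.1 p.2) (u, r)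

lemma Pfun_fst (α : ℝ) (f : ℝ → ℝ) (u : ℝ) :
    (fun r => Pfun α f u r) = Set.indicator (Ioi u) (fun r => f u * kern α u r) := by
  funext r
  simp [Pfun, Set.indicator_apply, Set.mem_Ioi, Set.mem_setOf_eq]

lemma Pfun_snd (α : ℝ) (f : ℝ → ℝ) (r : ℝ) :
    (fun u => Pfun α f u r) = Set.indicator (Iio r) (fun u => f u * kern α u r) := by
  funext u
  simp [Pfun, Set.indicator_apply, Set.mem_Iio, Set.mem_setOf_eq]

lemma Pfun_meas {α : ℝ} {f : ℝ → ℝ} (hf : Measurable f) :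
    Measurable (Function.uncurry (Pfun α f)) := by
  have h : Function.uncurry (Pfun α f) =
      Set.indicator {p : ℝ × ℝ | p.1 < p.2} (fun p => f p.1 * kern α p.1 p.2) := by
    funext p
    simp [Function.uncurry, Pfun]
  rw [h]
  refine Measurable.indicator ?_ (measurableSet_lt measurable_fst measurable_snd)
  unfold kern
  fun_prop

lemma psi_meas {α : ℝ} {f : ℝ → ℝ} (hf : Measurable f) : Measurable (psi α f) := by
  have h : psi α f = fun r => ∫ u, Set.indicator {p : ℝ × ℝ | 0 < p.2 ∧ p.2 < p.1}
      (fun p => f p.2 * kern α p.2 p.1) (r, u) := by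
    funext r
    rw [psi, ← MeasureTheory.integral_indicator measurableSet_Ioo]
    refine integral_congr_ae (Filter.Eventually.of_forall fun u => ?_)
    simp [Set.indicator_apply, Set.mem_Ioo, Set.mem_setOf_eq]
  rw [h]
  have hm : Measurable (Set.indicator {p : ℝ × ℝ | 0 < p.2 ∧ p.2 < p.1}
      (fun p : ℝ × ℝ => f p.2 * kern α p.2 p.1)) := by
    refine Measurable.indicator ?_ ?_
    · unfold kern; fun_prop
    · exact (measurableSet_lt measurable_const measurable_snd).inter
        (measurableSet_lt measurable_snd measurable_fst)
  exact (hm.stronglyMeasurable.integral_prod_right').measurable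

lemma Ioi_inter_Ioo {u x : ℝ} (hu : 0 < u) : Ioi u ∩ Ioo 0 x = Ioo u x := by
  ext r
  simp only [mem_inter_iff, mem_Ioi, mem_Ioo]
  exact ⟨fun h => ⟨h.1, h.2.2⟩, fun h => ⟨h.1, lt_trans hu h.1, h.2⟩⟩

lemma Iio_inter_Ioo {r x : ℝ} (hr : r < x) : Iio r ∩ Ioo 0 x = Ioo 0 r := by
  ext u
  simp only [mem_inter_iff, mem_Iio, mem_Ioo]
  exact ⟨fun h => ⟨h.2.1, h.1⟩, fun h => ⟨h.2, h.1, lt_trans h.2 hr⟩⟩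

lemma kern_setIntegral {α u x : ℝ} (hα : 0 < α) (hu : 0 ≤ u) (hux : u < x) :
    ∫ r in Ioo u x, kern α u r = (x^2-u^2)^α := by
  rw [← integral_Ioc_eq_integral_Ioo, ← intervalIntegral.integral_of_le hux.le]
  exact kern_integral hα hu hux

lemma kern_integrableOn {α u x : ℝ} (hα : 0 < α) (hu : 0 ≤ u) (hux : u < x) :
    IntegrableOn (kern α u) (Ioo u x) :=
  (intervalIntegrable_iff_integrableOn_Ioo_of_le hux.le).1 (kern_intervalIntegrable hα hu hux)

lemma fubini_key {α : ℝ} (hα : 0 < α) {f : ℝ → ℝ} (hf : Measurable f) {x C : ℝ} (hx : 0 < x)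
    (hC : ∀ᵐ u ∂(volume.restrict (Set.Icc (0:ℝ) x)), |f u| ≤ C) :
    IntegrableOn (psi α f) (Ioo 0 x) ∧
      ∫ u in Ioo 0 x, f u * (x^2-u^2)^α = ∫ r in Ioo 0 x, psi α f r := by
  set μ := volume.restrict (Ioo (0:ℝ) x) with hμ
  have hfin : IsFiniteMeasure μ := by
    constructor
    rw [hμ, Measure.restrict_apply_univ]
    exact measure_Ioo_lt_top
  have hCae : ∀ᵐ u ∂μ, |f u| ≤ C :=
    ae_mono (Measure.restrict_mono Ioo_subset_Icc_self le_rfl) hC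
  have hmem : ∀ᵐ u ∂μ, u ∈ Ioo (0:ℝ) x := ae_restrict_mem measurableSet_Ioo
  -- integrability in r of P u · for u ∈ Ioo 0 x
  have hint1 : ∀ u ∈ Ioo (0:ℝ) x, Integrable (fun r => Pfun α f u r) μ := by
    intro u hu
    rw [Pfun_fst, hμ, integrable_indicator_iff measurableSet_Ioi, IntegrableOn,
      Measure.restrict_restrict measurableSet_Ioi, Ioi_inter_Ioo hu.1]
    exact (kern_integrableOn hα hu.1.le hu.2).const_mul (f u)
  -- the marginal in r (with and without norms)
  have hmargN : ∀ u ∈ Ioo (0:ℝ) x, ∫ r, ‖Pfun α f u r‖ ∂μ = |f u| * (x^2-u^2)^α := by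
    intro u hu
    have h1 : (fun r => ‖Pfun α f u r‖) =
        Set.indicator (Ioi u) (fun r => ‖f u * kern α u r‖) := by
      funext r
      rw [show Pfun α f u r = Set.indicator (Ioi u) (fun r => f u * kern α u r) r from
        congrFun (Pfun_fst α f u) r]
      exact norm_indicator_eq_indicator_norm _ r
    rw [h1, hμ, MeasureTheory.integral_indicator measurableSet_Ioi,
      Measure.restrict_restrict measurableSet_Ioi, Ioi_inter_Ioo hu.1]
    have h2 : ∫ r in Ioo u x, ‖f u * kern α u r‖ = ∫ r in Ioo u x, |f u| * kern α u r := by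
      refine setIntegral_congr_fun measurableSet_Ioo (fun r hr => ?_)
      rw [Real.norm_eq_abs, abs_mul, abs_of_nonneg (kern_nonneg hα hu.1.le hr.1)]
    rw [h2, MeasureTheory.integral_const_mul, kern_setIntegral hα hu.1.le hu.2]
  have hmargL : ∀ u ∈ Ioo (0:ℝ) x, ∫ r, Pfun α f u r ∂μ = f u * (x^2-u^2)^α := by
    intro u hu
    rw [Pfun_fst, hμ, MeasureTheory.integral_indicator measurableSet_Ioi,
      Measure.restrict_restrict measurableSet_Ioi, Ioi_inter_Ioo hu.1,
      MeasureTheory.integral_const_mul, kern_setIntegral hα hu.1.le hu.2]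
  -- product integrability
  have hPm : AEStronglyMeasurable (Function.uncurry (Pfun α f)) (μ.prod μ) :=
    (Pfun_meas hf).aestronglyMeasurable
  have hPint : Integrable (Function.uncurry (Pfun α f)) (μ.prod μ) := by
    refine (integrable_prod_iff hPm).2 ⟨?_, ?_⟩
    · exact hmem.mono (fun u hu => hint1 u hu)
    · have hb : ∀ᵐ u ∂μ, ‖∫ r, ‖Function.uncurry (Pfun α f) (u, r)‖ ∂μ‖ ≤ |C| * (x^2)^α := by
        filter_upwards [hmem, hCae] with u hu hfu
        have hval : ∫ r, ‖Function.uncurry (Pfun α f) (u, r)‖ ∂μ = |f u| * (x^2-u^2)^α :=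
          hmargN u hu
        rw [hval, Real.norm_eq_abs]
        have h1 : (0:ℝ) ≤ x^2-u^2 := by nlinarith [hu.1, hu.2]
        have h2 : (0:ℝ) ≤ (x^2-u^2)^α := Real.rpow_nonneg h1 _
        rw [abs_of_nonneg (mul_nonneg (abs_nonneg _) h2)]
        have h3 : (x^2-u^2)^α ≤ (x^2)^α :=
          Real.rpow_le_rpow h1 (by nlinarith [hu.1]) hα.le
        have h4 : |f u| ≤ |C| := le_trans hfu (le_abs_self C)
        exact mul_le_mul h4 h3 h2 (abs_nonneg _)
      refine Integrable.mono' (integrable_const (|C| * (x^2)^α)) ?_ hb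
      exact hPm.norm.integral_prod_right'
  -- conclusion
  constructor
  · refine (hPint.integral_prod_right).congr ?_
    filter_upwards [hmem] with r hr
    rw [show (fun u => Function.uncurry (Pfun α f) (u, r)) = fun u => Pfun α f u r from rfl]
    rw [Pfun_snd, hμ, MeasureTheory.integral_indicator measurableSet_Iio,
      Measure.restrict_restrict measurableSet_Iio, Iio_inter_Ioo hr.2]
    rfl
  · have step1 : ∫ u in Ioo 0 x, f u * (x^2-u^2)^α = ∫ u, (∫ r, Pfun α f u r ∂μ) ∂μ := by
      refine integral_congr_ae ?_
      filter_upwards [hmem] with u hu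
      exact (hmargL u hu).symm
    have step2 : ∫ u, (∫ r, Pfun α f u r ∂μ) ∂μ = ∫ r, (∫ u, Pfun α f u r ∂μ) ∂μ :=
      integral_integral_swap hPint
    have step3 : ∫ r, (∫ u, Pfun α f u r ∂μ) ∂μ = ∫ r in Ioo 0 x, psi α f r := by
      refine integral_congr_ae ?_
      filter_upwards [hmem] with r hr
      rw [Pfun_snd, hμ, MeasureTheory.integral_indicator measurableSet_Iio,
        Measure.restrict_restrict measurableSet_Iio, Iio_inter_Ioo hr.2]
      rfl
    rw [step1, step2, step3]


/-- kernel with indicator, as a function of the endpoint -/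
noncomputable def hker (α : ℝ) (r : ℝ) : ℝ → ℝ :=
  Set.indicator (Ioo 0 r) (fun u => (r^2-u^2)^(α-1))

lemma hker_meas (α r : ℝ) : Measurable (hker α r) := by
  unfold hker
  exact Measurable.indicator (by fun_prop) measurableSet_Ioo

lemma hker_nonneg {α : ℝ} (r : ℝ) (u : ℝ) : 0 ≤ hker α r u := by
  unfold hker
  rcases Classical.em (u ∈ Ioo 0 r) with h | h
  · rw [Set.indicator_of_mem h]
    exact Real.rpow_nonneg (by nlinarith [h.1, h.2] : (0:ℝ) ≤ r^2-u^2) _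
  · rw [Set.indicator_of_notMem h]

lemma hker_integrable {α s : ℝ} (hα : 0 < α) (hs : 0 < s) {r : ℝ}
    (hr : r ∈ Ioo (s/2) (s+1)) : Integrable (hker α r) := by
  unfold hker
  rw [integrable_indicator_iff measurableSet_Ioo]
  have hr0 : 0 < r := lt_trans (by linarith) hr.1
  set K : ℝ := (s/2)^(α-1) + (2*(s+1))^(α-1) with hK
  obtain ⟨hra, hrb⟩ := hr
  have hbound : ∀ u ∈ Ioo (0:ℝ) r, ‖(r^2-u^2)^(α-1)‖ ≤ K * (r-u)^(α-1) := by
    intro u hu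
    obtain ⟨hu1, hu2⟩ := hu
    have h1 : (r^2-u^2 : ℝ) = (r-u)*(r+u) := by ring
    have h2 : (r^2-u^2 : ℝ) ^ (α-1) = (r-u)^(α-1) * (r+u)^(α-1) := by
      rw [h1, Real.mul_rpow (by linarith) (by linarith)]
    have h3 : (r+u)^(α-1) ≤ K := by
      rw [hK]
      exact rpow_le_add (by linarith) (by linarith) (by linarith)
    rw [Real.norm_eq_abs, h2,
      abs_of_nonneg (mul_nonneg (Real.rpow_nonneg (show (0:ℝ) ≤ r-u by linarith) _)
      (Real.rpow_nonneg (show (0:ℝ) ≤ r+u by linarith) _))]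
    rw [mul_comm K ((r-u)^(α-1))]
    exact mul_le_mul_of_nonneg_left h3 (Real.rpow_nonneg (show (0:ℝ) ≤ r-u by linarith) _)
  have hginte : IntegrableOn (fun u : ℝ => K * (r-u)^(α-1)) (Ioo 0 r) := by
    have h0 : IntervalIntegrable (fun y : ℝ => y ^ (α-1)) volume 0 r :=
      intervalIntegrable_rpow' (by linarith)
    have h1 := (h0.comp_sub_left r).symm
    simp only [sub_zero, sub_self] at h1
    rw [intervalIntegrable_iff_integrableOn_Ioo_of_le hr0.le] at h1
    exact h1.const_mul K
  refine Integrable.mono' hginte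
    ((show Measurable (fun u : ℝ => (r^2-u^2)^(α-1)) by fun_prop).aestronglyMeasurable) ?_
  rw [ae_restrict_iff' measurableSet_Ioo]
  exact Filter.Eventually.of_forall hbound

lemma hker_integral {α s : ℝ} (hα : 0 < α) (hs : 0 < s) {r : ℝ}
    (hr : r ∈ Ioo (s/2) (s+1)) :
    ∫ u, hker α r u = (∫ t in (0:ℝ)..1, (1-t^2)^(α-1)) * r^(2*α-1) := by
  have hr0 : 0 < r := lt_trans (by linarith) hr.1
  unfold hker
  rw [MeasureTheory.integral_indicator measurableSet_Ioo,
    ← integral_Ioc_eq_integral_Ioo, ← intervalIntegral.integral_of_le hr0.le]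
  have hsub := intervalIntegral.integral_comp_mul_right
    (fun u : ℝ => (r^2-u^2)^(α-1)) hr0.ne' (a := 0) (b := 1)
  simp only [zero_mul, one_mul] at hsub
  have key : ∫ x in (0:ℝ)..r, (r^2-x^2)^(α-1)
      = r * ∫ x in (0:ℝ)..1, (r^2-(x*r)^2)^(α-1) := by
    rw [hsub, smul_eq_mul, ← mul_assoc, mul_inv_cancel₀ hr0.ne', one_mul]
  have inner : ∫ x in (0:ℝ)..1, (r^2-(x*r)^2)^(α-1)
      = (r^2)^(α-1) * ∫ x in (0:ℝ)..1, (1-x^2)^(α-1) := by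
    rw [intervalIntegral.integral_of_le zero_le_one, intervalIntegral.integral_of_le zero_le_one,
      integral_Ioc_eq_integral_Ioo, integral_Ioc_eq_integral_Ioo, ← MeasureTheory.integral_const_mul]
    refine setIntegral_congr_fun measurableSet_Ioo (fun x hx => ?_)
    have h1 : (r^2-(x*r)^2 : ℝ) = r^2*(1-x^2) := by ring
    rw [h1, Real.mul_rpow (sq_nonneg r) (by nlinarith [hx.1, hx.2])]
  rw [key, inner]
  have e1 : ((r^2 : ℝ))^(α-1) = r ^ (2*(α-1)) := by
    rw [show (r^2 : ℝ) = r ^ ((2:ℕ):ℝ) by rw [Real.rpow_natCast], ← Real.rpow_mul hr0.le]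
    norm_num
  rw [e1, show (2*α-1 : ℝ) = 1 + 2*(α-1) by ring, Real.rpow_add hr0, Real.rpow_one]
  ring


lemma hker_of_mem {α r u : ℝ} (h : u ∈ Ioo 0 r) : hker α r u = (r^2-u^2)^(α-1) := by
  unfold hker
  exact Set.indicator_of_mem h _

lemma hker_of_not_mem {α r u : ℝ} (h : u ∉ Ioo 0 r) : hker α r u = 0 := by
  unfold hker
  exact Set.indicator_of_notMem h _

lemma psi_continuousAt {α : ℝ} (hα : 0 < α) {f : ℝ → ℝ} (hf : Measurable f) {s C : ℝ}
    (hs : 0 < s) (hC : ∀ᵐ u ∂(volume.restrict (Set.Icc (0:ℝ) (s+1))), |f u| ≤ C) :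
    ContinuousAt (psi α f) s := by
  have hJ : Ioo (s/2) (s+1) ∈ nhds s := Ioo_mem_nhds (by linarith) (by linarith)
  have hsJ : s ∈ Ioo (s/2) (s+1) := ⟨by linarith, by linarith⟩
  have hCae : ∀ᵐ u : ℝ, u ∈ Icc (0:ℝ) (s+1) → |f u| ≤ C :=
    (ae_restrict_iff' measurableSet_Icc).1 hC
  set W : ℝ → ℝ := fun r => ∫ u, f u * hker α r u with hWdef
  have hfh : ∀ r : ℝ, W r = ∫ u in Ioo 0 r, f u * (r^2-u^2)^(α-1) := by
    intro r
    rw [hWdef, ← MeasureTheory.integral_indicator measurableSet_Ioo]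
    refine integral_congr_ae (Filter.Eventually.of_forall fun u => ?_)
    unfold hker
    simp [Set.indicator_apply, mul_ite, mul_zero]
  have hpsiW : psi α f = fun r => (2*α*r) * W r := by
    funext r
    rw [hfh r, psi, ← MeasureTheory.integral_const_mul]
    refine setIntegral_congr_fun measurableSet_Ioo (fun u hu => ?_)
    unfold kern
    ring
  have hfhInt : ∀ r ∈ Ioo (s/2) (s+1), Integrable (fun u => f u * hker α r u) := by
    intro r hr
    refine Integrable.mono' ((hker_integrable hα hs hr).const_mul |C|)
      ((hf.mul (hker_meas α r)).aestronglyMeasurable) ?_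
    filter_upwards [hCae] with u hu
    rw [Real.norm_eq_abs, abs_mul]
    rcases Classical.em (u ∈ Set.Icc (0:ℝ) (s+1)) with h | h
    · rw [abs_of_nonneg (hker_nonneg r u)]
      exact mul_le_mul_of_nonneg_right (le_trans (hu h) (le_abs_self C)) (hker_nonneg r u)
    · have hz : hker α r u = 0 := by
        unfold hker
        apply Set.indicator_of_notMem
        intro hmem
        exact h ⟨hmem.1.le, le_trans hmem.2.le (by linarith [hr.2])⟩
      simp [hz]
  have hminInt : ∀ r : ℝ, Integrable (fun u => min (hker α r u) (hker α s u)) := by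
    intro r
    refine Integrable.mono' (hker_integrable hα hs hsJ)
      (((hker_meas α r).min (hker_meas α s)).aestronglyMeasurable) ?_
    refine Filter.Eventually.of_forall fun u => ?_
    rw [Real.norm_eq_abs, abs_of_nonneg (le_min (hker_nonneg r u) (hker_nonneg s u))]
    exact min_le_right _ _
  have hminT : Filter.Tendsto (fun r => ∫ u, min (hker α r u) (hker α s u)) (nhds s)
      (nhds (∫ u, hker α s u)) := by
    refine MeasureTheory.tendsto_integral_filter_of_dominated_convergence (hker α s)
      (Filter.Eventually.of_forall fun r =>
        (((hker_meas α r).min (hker_meas α s)).aestronglyMeasurable)) ?_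
      (hker_integrable hα hs hsJ) ?_
    · refine Filter.Eventually.of_forall fun r => Filter.Eventually.of_forall fun u => ?_
      rw [Real.norm_eq_abs, abs_of_nonneg (le_min (hker_nonneg r u) (hker_nonneg s u))]
      exact min_le_right _ _
    · refine Filter.Eventually.of_forall fun u => ?_
      rcases Classical.em (u ∈ Ioo (0:ℝ) s) with h | h
      · have hval : hker α s u = (s^2-u^2)^(α-1) := hker_of_mem h
        have hcont : Filter.Tendsto (fun r : ℝ => (r^2-u^2)^(α-1)) (nhds s)
            (nhds ((s^2-u^2)^(α-1))) := by
          have hb : (0:ℝ) < s^2-u^2 := by nlinarith [h.1, h.2]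
          exact (((continuous_pow 2).sub continuous_const).continuousAt).rpow_const
            (Or.inl hb.ne')
        have hev : (fun r : ℝ => (r^2-u^2)^(α-1)) =ᶠ[nhds s] fun r => hker α r u := by
          filter_upwards [Ioi_mem_nhds h.2] with r hr
          exact (hker_of_mem ⟨h.1, hr⟩).symm
        have h2 : Filter.Tendsto (fun r : ℝ => hker α r u) (nhds s) (nhds (hker α s u)) := by
          rw [hval]
          exact Filter.Tendsto.congr' hev hcont
        have := h2.min (tendsto_const_nhds (x := hker α s u))
        rwa [min_self] at this
      · have hz : hker α s u = 0 := hker_of_not_mem h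
        have heq : (fun r : ℝ => min (hker α r u) (hker α s u)) = fun _ : ℝ => 0 := by
          funext r
          rw [hz, min_eq_right (hker_nonneg r u)]
        rw [heq, hz]
        exact tendsto_const_nhds
  set c0 : ℝ := ∫ t in (0:ℝ)..1, (1-t^2)^(α-1) with hc0
  have habs : ∀ r ∈ Ioo (s/2) (s+1), ∫ u, |hker α r u - hker α s u|
      = (∫ u, hker α r u) + (∫ u, hker α s u) - 2 * ∫ u, min (hker α r u) (hker α s u) := by
    intro r hr
    have h1 : (fun u => |hker α r u - hker α s u|)
        = fun u => hker α r u + hker α s u - 2 * min (hker α r u) (hker α s u) := by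
      funext u
      rcases le_total (hker α r u) (hker α s u) with h | h
      · rw [abs_of_nonpos (by linarith), min_eq_left h]; ring
      · rw [abs_of_nonneg (by linarith), min_eq_right h]; ring
    have hA : Integrable (fun u => hker α r u + hker α s u) :=
      (hker_integrable hα hs hr).add (hker_integrable hα hs hsJ)
    have hB : Integrable (fun u => 2 * min (hker α r u) (hker α s u)) :=
      (hminInt r).const_mul 2
    rw [h1, integral_sub hA hB,
      integral_add (hker_integrable hα hs hr) (hker_integrable hα hs hsJ),
      MeasureTheory.integral_const_mul]
  have hdelta : Filter.Tendsto (fun r => ∫ u, |hker α r u - hker α s u|) (nhds s) (nhds 0) := by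
    have hIntT : Filter.Tendsto (fun r => ∫ u, hker α r u) (nhds s)
        (nhds (∫ u, hker α s u)) := by
      have hval : ∫ u, hker α s u = c0 * s^(2*α-1) := hker_integral hα hs hsJ
      have hcont : Filter.Tendsto (fun r : ℝ => c0 * r^(2*α-1)) (nhds s)
          (nhds (c0 * s^(2*α-1))) :=
        Filter.Tendsto.const_mul c0 (Real.continuousAt_rpow_const s (2*α-1) (Or.inl hs.ne'))
      rw [hval]
      refine Filter.Tendsto.congr' ?_ hcont
      filter_upwards [hJ] with r hr
      exact (hker_integral hα hs hr).symm
    have hlim1 : Filter.Tendsto (fun r => (∫ u, hker α r u) + (∫ u, hker α s u)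
        - 2 * ∫ u, min (hker α r u) (hker α s u)) (nhds s)
        (nhds ((∫ u, hker α s u) + (∫ u, hker α s u) - 2 * ∫ u, hker α s u)) :=
      Filter.Tendsto.sub (Filter.Tendsto.add hIntT tendsto_const_nhds) (hminT.const_mul 2)
    have hzero : (∫ u, hker α s u) + (∫ u, hker α s u) - 2 * ∫ u, hker α s u = 0 := by ring
    rw [hzero] at hlim1
    refine Filter.Tendsto.congr' ?_ hlim1
    filter_upwards [hJ] with r hr
    exact (habs r hr).symm
  have hWcont : ContinuousAt W s := by
    rw [ContinuousAt, tendsto_iff_norm_sub_tendsto_zero]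
    refine squeeze_zero' (g := fun r => |C| * ∫ u, |hker α r u - hker α s u|)
      (Filter.Eventually.of_forall fun r => norm_nonneg _) ?_ ?_
    · filter_upwards [hJ] with r hr
      have h1 : W r - W s = ∫ u, (f u * hker α r u - f u * hker α s u) :=
        (integral_sub (hfhInt r hr) (hfhInt s hsJ)).symm
      have hint1 : Integrable (fun u => ‖f u * hker α r u - f u * hker α s u‖) :=
        ((hfhInt r hr).sub (hfhInt s hsJ)).norm
      have hint2 : Integrable (fun u => |C| * |hker α r u - hker α s u|) :=
        (((hker_integrable hα hs hr).sub (hker_integrable hα hs hsJ)).abs).const_mul _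
      calc ‖W r - W s‖ = ‖∫ u, (f u * hker α r u - f u * hker α s u)‖ := by rw [h1]
        _ ≤ ∫ u, ‖f u * hker α r u - f u * hker α s u‖ := norm_integral_le_integral_norm _
        _ ≤ ∫ u, |C| * |hker α r u - hker α s u| := by
            refine integral_mono_ae hint1 hint2 ?_
            filter_upwards [hCae] with u hu
            rw [show f u * hker α r u - f u * hker α s u
              = f u * (hker α r u - hker α s u) by ring, Real.norm_eq_abs, abs_mul]
            rcases Classical.em (u ∈ Set.Icc (0:ℝ) (s+1)) with h | h
            · exact mul_le_mul_of_nonneg_right (le_trans (hu h) (le_abs_self C)) (abs_nonneg _)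
            · have hz1 : hker α r u = 0 := by
                apply hker_of_not_mem
                intro hmem
                exact h ⟨hmem.1.le, le_trans hmem.2.le (by linarith [hr.2])⟩
              have hz2 : hker α s u = 0 := by
                apply hker_of_not_mem
                intro hmem
                exact h ⟨hmem.1.le, le_trans hmem.2.le (by linarith)⟩
              simp [hz1, hz2]
        _ = |C| * ∫ u, |hker α r u - hker α s u| := MeasureTheory.integral_const_mul _ _
    · have := hdelta.const_mul |C|
      simpa using this
  rw [hpsiW]
  exact ContinuousAt.mul ((continuous_const.mul continuous_id).continuousAt) hWcont

end RLaux

/-- For `d ≥ 4` and measurable, locally essentially bounded `f : ℝ_{≥0} → ℝ`, the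
generalized Riemann–Liouville transform
`F(s) = (2 Γ(d/2)/(√π Γ((d-1)/2))) ∫₀¹ f(ts)(1-t²)^{(d-3)/2} dt` is
differentiable at every `s ∈ (0, ∞)`. -/
theorem riemann_liouville_transform_differentiable (d : ℕ) (hd : 4 ≤ d) (f : ℝ → ℝ)
    (hf_meas : Measurable f)
    (hf_bdd : ∀ s : ℝ, 0 < s →
      ∃ C : ℝ, ∀ᵐ t ∂(volume.restrict (Set.Icc (0 : ℝ) s)), |f t| ≤ C) :
    ∀ s : ℝ, 0 < s →
      DifferentiableAt ℝ
        (fun s : ℝ =>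
          (2 * Real.Gamma ((d : ℝ) / 2) /
              (Real.sqrt Real.pi * Real.Gamma (((d : ℝ) - 1) / 2))) *
            ∫ t in Set.Ioo (0 : ℝ) 1, f (t * s) * (1 - t ^ 2) ^ (((d : ℝ) - 3) / 2)) s := by
  intro s hs
  set c : ℝ := 2 * Real.Gamma ((d : ℝ) / 2) / (Real.sqrt Real.pi * Real.Gamma (((d : ℝ) - 1) / 2))
    with hc
  set α : ℝ := ((d : ℝ) - 3) / 2 with hαdef
  have hd4 : (4 : ℝ) ≤ (d : ℝ) := by exact_mod_cast hd
  have hα : 0 < α := by rw [hαdef]; linarith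
  -- the key pointwise identity
  have hT : ∀ x : ℝ, 0 < x →
      (∫ t in Set.Ioo (0:ℝ) 1, f (t*x) * (1-t^2) ^ α)
        = x ^ (-(2*α+1)) * ∫ r in (0:ℝ)..x, RLaux.psi α f r := by
    intro x hx
    obtain ⟨Cx, hCx⟩ := hf_bdd x hx
    have hfub := (RLaux.fubini_key hα hf_meas hx hCx).2
    have step1 : (∫ t in Set.Ioo (0:ℝ) 1, f (t*x) * (1-t^2) ^ α)
        = ∫ t in (0:ℝ)..1, (fun u => f u * (1-(u/x)^2) ^ α) (t*x) := by
      rw [← MeasureTheory.integral_Ioc_eq_integral_Ioo,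
        ← intervalIntegral.integral_of_le zero_le_one]
      refine intervalIntegral.integral_congr fun t _ => ?_
      simp only [mul_div_cancel_right₀ _ hx.ne']
    have step2 : (∫ t in (0:ℝ)..1, (fun u => f u * (1-(u/x)^2) ^ α) (t*x))
        = x⁻¹ • ∫ u in (0:ℝ)..x, f u * (1-(u/x)^2) ^ α := by
      have h := intervalIntegral.integral_comp_mul_right
        (fun u => f u * (1-(u/x)^2) ^ α) hx.ne' (a := 0) (b := 1)
      simpa using h
    have step3 : (∫ u in (0:ℝ)..x, f u * (1-(u/x)^2) ^ α)
        = ((x^2) ^ α)⁻¹ * ∫ u in Set.Ioo (0:ℝ) x, f u * (x^2-u^2) ^ α := by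
      rw [intervalIntegral.integral_of_le hx.le, MeasureTheory.integral_Ioc_eq_integral_Ioo,
        ← MeasureTheory.integral_const_mul]
      refine MeasureTheory.setIntegral_congr_fun measurableSet_Ioo fun u hu => ?_
      have h1 : (1 - (u/x)^2 : ℝ) = (x^2-u^2)/x^2 := by
        field_simp
      rw [h1, Real.div_rpow (by nlinarith [hu.1, hu.2]) (sq_nonneg x)]
      ring
    rw [step1, step2, step3, hfub, smul_eq_mul,
      intervalIntegral.integral_of_le hx.le, MeasureTheory.integral_Ioc_eq_integral_Ioo]
    have h2 : ((x^2 : ℝ)) ^ α = x ^ (2*α) := by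
      rw [show (x^2:ℝ) = x ^ ((2:ℕ):ℝ) by rw [Real.rpow_natCast], ← Real.rpow_mul hx.le]
      norm_num
    have hxpow : x ^ (-(2*α+1)) = x⁻¹ * (x ^ (2*α))⁻¹ := by
      rw [show (-(2*α+1) : ℝ) = (-1) + (-(2*α)) by ring, Real.rpow_add hx,
        Real.rpow_neg_one, Real.rpow_neg hx.le]
    rw [h2, hxpow]
    ring
  -- eventual equality near s
  have hEq : (fun x : ℝ => c * ∫ t in Set.Ioo (0:ℝ) 1, f (t*x) * (1-t^2) ^ α)
      =ᶠ[nhds s] fun x => c * (x ^ (-(2*α+1)) * ∫ r in (0:ℝ)..x, RLaux.psi α f r) := by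
    filter_upwards [Ioi_mem_nhds hs] with x hx
    rw [hT x hx]
  rw [Filter.EventuallyEq.differentiableAt_iff hEq]
  -- differentiate the right-hand side
  obtain ⟨C, hC⟩ := hf_bdd (s+1) (by linarith)
  have hCs : ∀ᵐ u ∂(volume.restrict (Set.Icc (0:ℝ) s)), |f u| ≤ C :=
    ae_mono (Measure.restrict_mono (Set.Icc_subset_Icc_right (by linarith)) le_rfl) hC
  have hIntOn : MeasureTheory.IntegrableOn (RLaux.psi α f) (Set.Ioo 0 s) :=
    (RLaux.fubini_key hα hf_meas hs hCs).1
  have hII : IntervalIntegrable (RLaux.psi α f) volume 0 s :=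
    (intervalIntegrable_iff_integrableOn_Ioo_of_le hs.le).2 hIntOn
  have hMeasAt : StronglyMeasurableAtFilter (RLaux.psi α f) (nhds s) :=
    (RLaux.psi_meas hf_meas).stronglyMeasurable.stronglyMeasurableAtFilter
  have hContAt : ContinuousAt (RLaux.psi α f) s := RLaux.psi_continuousAt hα hf_meas hs hC
  refine DifferentiableAt.const_mul ?_ c
  refine DifferentiableAt.mul ?_ ?_
  · exact (Real.hasDerivAt_rpow_const (p := -(2*α+1)) (Or.inl hs.ne')).differentiableAt
  · exact (intervalIntegral.integral_hasDerivAt_right hII hMeasAt hContAt).differentiableAt
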